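/- (Lemma 2) The image of the space R_𝐝 of multihomogeneous polynomials of multidegree 𝐝 under the substitution map u is exactly 𝒜; that is, u(R_𝐝) = 𝒜. -/

import Mathlib

open MvPolynomial

/-- Variables of `R`: `x_{i,j}` for `j : Fin s`, `i : Fin (n j + 1)` (index `0` is `x_{0,j}`). -/
abbrev RVar (s : ℕ) (n : Fin s → ℕ) := Σ j : Fin s, Fin (n j + 1)

/-- Variables of `S`: `none` is `z_0`, `some ⟨j,i⟩` is `z_{i+1,j}`. -/
abbrev SVar (s : ℕ) (n : Fin s → ℕ) := Option (Σ j : Fin s, Fin (n j))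

/-- `f` is multihomogeneous of multidegree `d`. -/
def MultiHomog {K : Type*} [CommSemiring K] {s : ℕ} {n : Fin s → ℕ} (d : Fin s → ℕ)
    (f : MvPolynomial (RVar s n) K) : Prop :=
  ∀ m ∈ f.support, ∀ j : Fin s, ∑ i : Fin (n j + 1), m ⟨j, i⟩ = d j

/-- The substitution `u : R → S`, `x_{0,j} ↦ z_0`, `x_{i,j} ↦ z_{i,j}` for `i ≥ 1`. -/
noncomputable def subst (K : Type*) [CommSemiring K] (s : ℕ) (n : Fin s → ℕ) :
    MvPolynomial (RVar s n) K →ₐ[K] MvPolynomial (SVar s n) K :=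
  aeval fun v => if h : (v.2 : ℕ) = 0 then X none
    else X (some ⟨v.1, ⟨(v.2 : ℕ) - 1, by have := v.2.isLt; omega⟩⟩)

section Aux

variable {s : ℕ} {n : Fin s → ℕ}

/-- The variable map underlying `subst`. -/
def phi (s : ℕ) (n : Fin s → ℕ) : RVar s n → SVar s n :=
  fun v => if h : (v.2 : ℕ) = 0 then none
    else some ⟨v.1, ⟨(v.2 : ℕ) - 1, by have := v.2.isLt; omega⟩⟩

lemma phi_zero (j : Fin s) : phi s n ⟨j, 0⟩ = none := rfl

lemma phi_succ (j : Fin s) (i : Fin (n j)) : phi s n ⟨j, i.succ⟩ = some ⟨j, i⟩ := by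
  simp only [phi, Fin.val_succ]
  rw [dif_neg (by omega)]
  congr 1

lemma subst_eq_rename (K : Type*) [CommSemiring K] (s : ℕ) (n : Fin s → ℕ) :
    subst K s n = rename (phi s n) := by
  apply MvPolynomial.algHom_ext
  intro v
  simp only [subst, aeval_X, rename_X, phi]
  split <;> rfl

lemma mapDomain_apply_eq (μ : RVar s n →₀ ℕ) (b : SVar s n) :
    Finsupp.mapDomain (phi s n) μ b = ∑ a : RVar s n, if phi s n a = b then μ a else 0 := by
  rw [Finsupp.mapDomain, Finsupp.sum_apply, Finsupp.sum,
    Finset.sum_subset (Finset.subset_univ _)]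
  · exact Finset.sum_congr rfl fun a _ => by rw [Finsupp.single_apply]
  · intro a _ ha
    simp [Finsupp.notMem_support_iff.mp ha]

lemma sum_sigma_fin (F : RVar s n → ℕ) :
    ∑ a : RVar s n, F a = ∑ j : Fin s, ∑ i : Fin (n j + 1), F ⟨j, i⟩ := by
  rw [← Finset.univ_sigma_univ, Finset.sum_sigma]

lemma sum_sigma_fin' (F : (Σ j : Fin s, Fin (n j)) → ℕ) :
    ∑ a : Σ j : Fin s, Fin (n j), F a = ∑ j : Fin s, ∑ i : Fin (n j), F ⟨j, i⟩ := by
  rw [← Finset.univ_sigma_univ, Finset.sum_sigma]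

lemma mapDomain_none (μ : RVar s n →₀ ℕ) :
    Finsupp.mapDomain (phi s n) μ none = ∑ j, μ ⟨j, 0⟩ := by
  rw [mapDomain_apply_eq, sum_sigma_fin]
  refine Finset.sum_congr rfl fun j _ => ?_
  rw [Fin.sum_univ_succ]
  rw [if_pos (phi_zero j)]
  have : ∀ i : Fin (n j), (if phi s n ⟨j, i.succ⟩ = none then μ ⟨j, i.succ⟩ else 0) = 0 := by
    intro i
    rw [if_neg]
    rw [phi_succ]
    simp
  simp only [this, Finset.sum_const_zero, add_zero]

lemma mapDomain_some (μ : RVar s n →₀ ℕ) (j : Fin s) (i : Fin (n j)) :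
    Finsupp.mapDomain (phi s n) μ (some ⟨j, i⟩) = μ ⟨j, i.succ⟩ := by
  rw [mapDomain_apply_eq, Fintype.sum_eq_single (⟨j, i.succ⟩ : RVar s n)]
  · rw [if_pos (phi_succ j i)]
  · intro v hv
    rw [if_neg]
    intro h
    apply hv
    obtain ⟨j', i'⟩ := v
    rcases Fin.eq_zero_or_eq_succ i' with rfl | ⟨k, rfl⟩
    · rw [phi_zero] at h; exact absurd h (by simp)
    · rw [phi_succ] at h
      obtain ⟨rfl, hk⟩ := Sigma.mk.inj_iff.mp (Option.some.inj h)
      rw [eq_of_heq hk]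

/-- Splitting a sum over `SVar` into the `none` part and blocks. -/
lemma sum_svar (m : SVar s n →₀ ℕ) :
    ∑ v : SVar s n, m v = m none + ∑ j, ∑ i : Fin (n j), m (some ⟨j, i⟩) := by
  rw [Fintype.sum_option]
  congr 1
  exact sum_sigma_fin' fun a => m (some a)

/-- Lift of an exponent vector along `phi`. -/
noncomputable def liftm (d : Fin s → ℕ) (m : SVar s n →₀ ℕ) : RVar s n →₀ ℕ :=
  Finsupp.equivFunOnFinite.symm fun v =>
    if h : (v.2 : ℕ) = 0 then d v.1 - ∑ i : Fin (n v.1), m (some ⟨v.1, i⟩)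
    else m (some ⟨v.1, ⟨(v.2 : ℕ) - 1, by have := v.2.isLt; omega⟩⟩)

lemma liftm_zero (d : Fin s → ℕ) (m : SVar s n →₀ ℕ) (j : Fin s) :
    liftm d m ⟨j, 0⟩ = d j - ∑ i : Fin (n j), m (some ⟨j, i⟩) := by
  simp [liftm]

lemma liftm_succ (d : Fin s → ℕ) (m : SVar s n →₀ ℕ) (j : Fin s) (i : Fin (n j)) :
    liftm d m ⟨j, i.succ⟩ = m (some ⟨j, i⟩) := by
  simp only [liftm, Finsupp.coe_equivFunOnFinite_symm, Fin.val_succ]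
  rw [dif_neg (by omega)]
  congr 2

end Aux

/-- **Lemma 2.** The image under `u` of the space `R_𝐝` of multihomogeneous
polynomials of multidegree `𝐝` is exactly `𝒜`, the set of polynomials all of whose
monomials have total degree `d = ∑ d j` and degree at most `d j` in the `j`-th block of
variables for each `j`. -/
theorem stmt4 (K : Type*) [Field K] (s : ℕ) (hs : 0 < s) (n : Fin s → ℕ) (hn : ∀ j, 0 < n j)
    (d : Fin s → ℕ) :
    (subst K s n) '' {f | MultiHomog d f} =
      {g : MvPolynomial (SVar s n) K | ∀ m ∈ g.support,
        (∑ v : SVar s n, m v) = (∑ j, d j) ∧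
        ∀ j : Fin s, (∑ i : Fin (n j), m (some ⟨j, i⟩)) ≤ d j} := by
  rw [subst_eq_rename]
  ext g
  constructor
  · rintro ⟨f, hf, rfl⟩
    intro m hm
    have hne := MvPolynomial.mem_support_iff.mp hm
    obtain ⟨μ, hμ, hμf⟩ := coeff_rename_ne_zero _ _ _ hne
    have hμs : μ ∈ f.support := MvPolynomial.mem_support_iff.mpr hμf
    have hdeg : ∀ j, ∑ i : Fin (n j + 1), μ ⟨j, i⟩ = d j := hf μ hμs
    subst hμ
    constructor
    · rw [sum_svar, mapDomain_none]
      have : ∀ j : Fin s, ∑ i : Fin (n j), Finsupp.mapDomain (phi s n) μ (some ⟨j, i⟩)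
          = ∑ i : Fin (n j), μ ⟨j, i.succ⟩ :=
        fun j => Finset.sum_congr rfl fun i _ => mapDomain_some μ j i
      simp only [this]
      rw [← Finset.sum_add_distrib]
      refine Finset.sum_congr rfl fun j _ => ?_
      rw [← Fin.sum_univ_succ (fun i => μ ⟨j, i⟩)]
      exact hdeg j
    · intro j
      have h1 : ∑ i : Fin (n j), Finsupp.mapDomain (phi s n) μ (some ⟨j, i⟩)
          = ∑ i : Fin (n j), μ ⟨j, i.succ⟩ :=
        Finset.sum_congr rfl fun i _ => mapDomain_some μ j i
      rw [h1, ← hdeg j, Fin.sum_univ_succ (fun i => μ ⟨j, i⟩)]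
      omega
  · intro hg
    refine ⟨∑ m ∈ g.support, monomial (liftm d m) (g.coeff m), ?_, ?_⟩
    · -- multihomogeneity
      intro μ hμ j
      have := MvPolynomial.support_sum hμ
      obtain ⟨m, hm, hμm⟩ := Finset.mem_biUnion.mp this
      have : μ = liftm d m := by
        have := MvPolynomial.support_monomial_subset hμm
        simpa using this
      subst this
      obtain ⟨_, hble⟩ := hg m hm
      rw [Fin.sum_univ_succ (fun i => liftm d m ⟨j, i⟩), liftm_zero]
      have : ∀ i : Fin (n j), liftm d m ⟨j, i.succ⟩ = m (some ⟨j, i⟩) :=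
        fun i => liftm_succ d m j i
      simp only [this]
      have := hble j
      omega
    · -- image equals g
      rw [map_sum]
      have key : ∀ m ∈ g.support,
          (rename (phi s n)) (monomial (liftm d m) (g.coeff m)) = monomial m (g.coeff m) := by
        intro m hm
        rw [rename_monomial]
        obtain ⟨htot, hble⟩ := hg m hm
        have hmap : Finsupp.mapDomain (phi s n) (liftm d m) = m := by
          refine Finsupp.ext fun v => ?_
          cases v with
          | none =>
            rw [mapDomain_none]
            have h1 : ∀ j : Fin s, liftm d m ⟨j, 0⟩ = d j - ∑ i : Fin (n j), m (some ⟨j, i⟩) :=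
              fun j => liftm_zero d m j
            simp only [h1]
            rw [sum_svar] at htot
            have h2 : ∑ j : Fin s, (d j - ∑ i : Fin (n j), m (some ⟨j, i⟩))
                + ∑ j : Fin s, (∑ i : Fin (n j), m (some ⟨j, i⟩)) = ∑ j, d j := by
              rw [← Finset.sum_add_distrib]
              exact Finset.sum_congr rfl fun j _ => Nat.sub_add_cancel (hble j)
            omega
          | some a =>
            obtain ⟨j, i⟩ := a
            rw [mapDomain_some, liftm_succ]
        rw [hmap]
      rw [Finset.sum_congr rfl key, support_sum_monomial_coeff]
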